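/- For any positive integer n, the ratio Ω_{n-1}/Ω_n of unit ball volumes equals (1/π) times the infinite product over k ≥ 1 of (2k/(2k-1)) · ((2k+n-1)/(2k+n)). -/

import Mathlib

open Real

noncomputable def unitBallVolume (n : ℕ) : ℝ :=
  Real.pi ^ ((n : ℝ) / 2) / Real.Gamma (1 + (n : ℝ) / 2)

open Filter Finset Topology


lemma gammaSeq_pos (s : ℝ) (hs : 0 < s) (N : ℕ) (hN : 1 ≤ N) :
    0 < Real.GammaSeq s N := by
  rw [Real.GammaSeq]
  have h1 : (0:ℝ) < (N:ℝ) := by exact_mod_cast hN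
  have h2 : (0:ℝ) < ∏ j ∈ Finset.range (N + 1), (s + j) :=
    Finset.prod_pos fun j _ => by positivity
  positivity

lemma Qform (a : ℝ) (ha : 0 < a + 1) (N : ℕ) (hN : 1 ≤ N) :
    ∏ k ∈ range N, (a + (k:ℝ) + 1) =
      (N:ℝ) ^ (a + 1) * (N.factorial : ℝ) / (Real.GammaSeq (a+1) N * (a + N + 1)) := by
  have hNR : (0:ℝ) < (N:ℝ) := by exact_mod_cast hN
  have h1 : ∏ j ∈ range (N+1), ((a+1) + (j:ℝ)) =
      (∏ k ∈ range N, (a + (k:ℝ) + 1)) * (a + N + 1) := by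
    rw [prod_range_succ]
    congr 1
    · exact prod_congr rfl fun k _ => by ring
    · ring
  have hG : Real.GammaSeq (a+1) N =
      (N:ℝ) ^ (a+1) * (N.factorial : ℝ) / ((∏ k ∈ range N, (a + (k:ℝ) + 1)) * (a + N + 1)) := by
    rw [Real.GammaSeq, h1]
  have hP : (0:ℝ) < ∏ k ∈ range N, (a + (k:ℝ) + 1) :=
    prod_pos fun k _ => by have : (0:ℝ) ≤ k := k.cast_nonneg; linarith
  have haN : (0:ℝ) < a + N + 1 := by linarith
  have hpow : (0:ℝ) < (N:ℝ) ^ (a+1) := rpow_pos_of_pos hNR _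
  have hfac : (0:ℝ) < (N.factorial : ℝ) := by exact_mod_cast N.factorial_pos
  rw [hG]
  field_simp

lemma alg (A B C D G1 G2 G3 G4 x1 x2 x3 x4 F : ℝ) (hAB : A*B = C*D)
    (hG1 : G1 ≠ 0) (hG2 : G2 ≠ 0) (hG3 : G3 ≠ 0) (hG4 : G4 ≠ 0)
    (hx1 : x1 ≠ 0) (hx2 : x2 ≠ 0) (hx3 : x3 ≠ 0) (hx4 : x4 ≠ 0)
    (hF : F ≠ 0) (hC : C ≠ 0) (hD : D ≠ 0) :
    (A * F / (G1 * x1)) * (B * F / (G2 * x2)) /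
      ((C * F / (G3 * x3)) * (D * F / (G4 * x4))) =
      (x3 * x4 / (x1 * x2)) * ((G3 * G4) / (G1 * G2)) := by
  field_simp
  linear_combination hAB

set_option maxHeartbeats 400000 in
lemma prodform (n : ℕ) (hn : 1 ≤ n) (N : ℕ) (hN : 1 ≤ N) :
    ∏ k ∈ range N, ((2*((k:ℝ)+1)/(2*((k:ℝ)+1)-1)) *
        ((2*((k:ℝ)+1)+(n:ℝ)-1)/(2*((k:ℝ)+1)+(n:ℝ)))) =
      ((-1/2 + (N:ℝ) + 1) * ((n:ℝ)/2 + (N:ℝ) + 1) /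
          ((0 + (N:ℝ) + 1) * (((n:ℝ)-1)/2 + (N:ℝ) + 1))) *
      ((Real.GammaSeq (-1/2+1) N * Real.GammaSeq ((n:ℝ)/2+1) N) /
        (Real.GammaSeq (0+1) N * Real.GammaSeq (((n:ℝ)-1)/2+1) N)) := by
  have hn1 : (1:ℝ) ≤ (n:ℝ) := by exact_mod_cast hn
  have hNR : (0:ℝ) < (N:ℝ) := by exact_mod_cast hN
  have step1 : ∀ k ∈ range N, (2*((k:ℝ)+1)/(2*((k:ℝ)+1)-1)) *
      ((2*((k:ℝ)+1)+(n:ℝ)-1)/(2*((k:ℝ)+1)+(n:ℝ))) =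
      ((0 + (k:ℝ) + 1) * (((n:ℝ)-1)/2 + (k:ℝ) + 1)) /
        ((-1/2 + (k:ℝ) + 1) * ((n:ℝ)/2 + (k:ℝ) + 1)) := by
    intro k _
    have hk : (0:ℝ) ≤ (k:ℝ) := k.cast_nonneg
    rw [div_mul_div_comm, div_eq_div_iff (by nlinarith) (by nlinarith)]
    ring
  rw [Finset.prod_congr rfl step1, Finset.prod_div_distrib,
    Finset.prod_mul_distrib, Finset.prod_mul_distrib,
    Qform 0 (by norm_num) N hN, Qform (((n:ℝ)-1)/2) (by linarith) N hN,
    Qform (-1/2) (by norm_num) N hN, Qform ((n:ℝ)/2) (by positivity) N hN]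
  have hAB : (N:ℝ) ^ ((0:ℝ)+1) * (N:ℝ) ^ (((n:ℝ)-1)/2+1) =
      (N:ℝ) ^ ((-1/2:ℝ)+1) * (N:ℝ) ^ ((n:ℝ)/2+1) := by
    rw [← Real.rpow_add hNR, ← Real.rpow_add hNR]
    ring_nf
  have hG1 : 0 < Real.GammaSeq ((0:ℝ)+1) N := gammaSeq_pos _ (by norm_num) N hN
  have hG2 : 0 < Real.GammaSeq (((n:ℝ)-1)/2+1) N := gammaSeq_pos _ (by linarith) N hN
  have hG3 : 0 < Real.GammaSeq ((-1/2:ℝ)+1) N := gammaSeq_pos _ (by norm_num) N hN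
  have hG4 : 0 < Real.GammaSeq ((n:ℝ)/2+1) N := gammaSeq_pos _ (by positivity) N hN
  have hfac : (0:ℝ) < (N.factorial : ℝ) := by exact_mod_cast N.factorial_pos
  exact alg _ _ _ _ _ _ _ _ _ _ _ _ _ hAB hG1.ne' hG2.ne' hG3.ne' hG4.ne'
    (by linarith) (by linarith) (by linarith) (by positivity) hfac.ne'
    (rpow_pos_of_pos hNR _).ne' (rpow_pos_of_pos hNR _).ne'

lemma ratio_tendsto (c d : ℝ) :
    Tendsto (fun N : ℕ => ((N:ℝ) + c) / ((N:ℝ) + d)) atTop (𝓝 1) := by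
  have h0 : Tendsto (fun N : ℕ => (c - d) / ((N:ℝ) + d)) atTop (𝓝 0) :=
    Filter.Tendsto.div_atTop tendsto_const_nhds
      (tendsto_atTop_add_const_right _ d tendsto_natCast_atTop_atTop)
  have h1 : Tendsto (fun N : ℕ => 1 + (c - d) / ((N:ℝ) + d)) atTop (𝓝 1) := by
    simpa using h0.const_add 1
  apply Tendsto.congr' _ h1
  filter_upwards [eventually_gt_atTop ⌈|d|⌉₊] with N hN
  have h2 : |d| ≤ (⌈|d|⌉₊ : ℝ) := Nat.le_ceil _
  have h3 : (⌈|d|⌉₊ : ℝ) < (N : ℝ) := by exact_mod_cast hN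
  have h4 : ((N:ℝ) + d) ≠ 0 := by
    have h5 := neg_abs_le d
    have : (0:ℝ) < (N:ℝ) + d := by linarith
    exact this.ne'
  field_simp
  ring

lemma tendstoL (n : ℕ) (hn : 1 ≤ n) :
    Tendsto (fun N => ∏ k ∈ range N, ((2*((k:ℝ)+1)/(2*((k:ℝ)+1)-1)) *
        ((2*((k:ℝ)+1)+(n:ℝ)-1)/(2*((k:ℝ)+1)+(n:ℝ))))) atTop
      (𝓝 (Real.sqrt π * Real.Gamma ((n:ℝ)/2+1) / Real.Gamma (((n:ℝ)-1)/2+1))) := by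
  have hn1 : (1:ℝ) ≤ (n:ℝ) := by exact_mod_cast hn
  have hΓpos1 : 0 < Real.Gamma ((0:ℝ)+1) := Real.Gamma_pos_of_pos (by norm_num)
  have hΓpos2 : 0 < Real.Gamma (((n:ℝ)-1)/2+1) := Real.Gamma_pos_of_pos (by linarith)
  have T1 : Tendsto (fun N : ℕ => (-1/2 + (N:ℝ) + 1) * ((n:ℝ)/2 + (N:ℝ) + 1) /
      ((0 + (N:ℝ) + 1) * (((n:ℝ)-1)/2 + (N:ℝ) + 1))) atTop (𝓝 1) := by
    have := (ratio_tendsto (1/2) 1).mul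
      (ratio_tendsto ((n:ℝ)/2+1) (((n:ℝ)-1)/2+1))
    rw [mul_one] at this
    apply Tendsto.congr _ this
    intro N
    rw [div_mul_div_comm]
    congr 1 <;> ring
  have T2 : Tendsto (fun N : ℕ => (Real.GammaSeq (-1/2+1) N * Real.GammaSeq ((n:ℝ)/2+1) N) /
      (Real.GammaSeq (0+1) N * Real.GammaSeq (((n:ℝ)-1)/2+1) N)) atTop
      (𝓝 ((Real.Gamma (-1/2+1) * Real.Gamma ((n:ℝ)/2+1)) /
        (Real.Gamma (0+1) * Real.Gamma (((n:ℝ)-1)/2+1)))) :=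
    Tendsto.div ((Real.GammaSeq_tendsto_Gamma _).mul (Real.GammaSeq_tendsto_Gamma _))
      ((Real.GammaSeq_tendsto_Gamma _).mul (Real.GammaSeq_tendsto_Gamma _))
      (by positivity)
  have T3 := T1.mul T2
  rw [one_mul] at T3
  have hval : (Real.Gamma (-1/2+1) * Real.Gamma ((n:ℝ)/2+1)) /
      (Real.Gamma (0+1) * Real.Gamma (((n:ℝ)-1)/2+1)) =
      Real.sqrt π * Real.Gamma ((n:ℝ)/2+1) / Real.Gamma (((n:ℝ)-1)/2+1) := by
    norm_num [Real.Gamma_one]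
    rw [Real.Gamma_one_half_eq]
  rw [hval] at T3
  apply T3.congr'
  filter_upwards [eventually_ge_atTop 1] with N hN
  exact (prodform n hn N hN).symm

lemma multipliable_g (n : ℕ) (hn : 1 ≤ n) :
    Multipliable (fun k : ℕ => (2*((k:ℝ)+1)/(2*((k:ℝ)+1)-1)) *
      ((2*((k:ℝ)+1)+(n:ℝ)-1)/(2*((k:ℝ)+1)+(n:ℝ)))) := by
  have hn0 : (0:ℝ) ≤ (n:ℝ) := n.cast_nonneg
  have hgid : ∀ k : ℕ, (2*((k:ℝ)+1)/(2*((k:ℝ)+1)-1)) *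
      ((2*((k:ℝ)+1)+(n:ℝ)-1)/(2*((k:ℝ)+1)+(n:ℝ))) =
      1 + (n:ℝ)/((2*(k:ℝ)+1)*(2*(k:ℝ)+2+(n:ℝ))) := by
    intro k
    have hk : (0:ℝ) ≤ (k:ℝ) := k.cast_nonneg
    have hb : ((2*(k:ℝ)+1)*(2*(k:ℝ)+2+(n:ℝ))) ≠ 0 := by positivity
    rw [div_mul_div_comm, one_add_div hb, div_eq_div_iff (by nlinarith) hb]
    ring
  have hg1 : ∀ k : ℕ, 1 ≤ (2*((k:ℝ)+1)/(2*((k:ℝ)+1)-1)) *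
      ((2*((k:ℝ)+1)+(n:ℝ)-1)/(2*((k:ℝ)+1)+(n:ℝ))) := by
    intro k
    rw [hgid k]
    have hk : (0:ℝ) ≤ (k:ℝ) := k.cast_nonneg
    have : 0 ≤ (n:ℝ)/((2*(k:ℝ)+1)*(2*(k:ℝ)+2+(n:ℝ))) := by positivity
    linarith
  have hmaj : Summable (fun k : ℕ => (n:ℝ) * (1/((k:ℝ)+1)^2)) := by
    apply Summable.mul_left
    have h := (summable_nat_add_iff 1).mpr
      (Real.summable_one_div_nat_pow.mpr one_lt_two)
    apply h.congr
    intro k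
    push_cast
    ring
  have hlog : Summable (fun k : ℕ => Real.log
      ((2*((k:ℝ)+1)/(2*((k:ℝ)+1)-1)) *
        ((2*((k:ℝ)+1)+(n:ℝ)-1)/(2*((k:ℝ)+1)+(n:ℝ))))) := by
    apply Summable.of_nonneg_of_le (fun k => Real.log_nonneg (hg1 k)) _ hmaj
    intro k
    have hk : (0:ℝ) ≤ (k:ℝ) := k.cast_nonneg
    have hpos : (0:ℝ) < (2*((k:ℝ)+1)/(2*((k:ℝ)+1)-1)) *
        ((2*((k:ℝ)+1)+(n:ℝ)-1)/(2*((k:ℝ)+1)+(n:ℝ))) := by linarith [hg1 k]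
    refine le_trans (Real.log_le_sub_one_of_pos hpos) ?_
    rw [hgid k]
    have h2 : ((k:ℝ)+1)^2 ≤ (2*(k:ℝ)+1)*(2*(k:ℝ)+2+(n:ℝ)) := by nlinarith
    have h3 : (0:ℝ) < ((k:ℝ)+1)^2 := by positivity
    have := div_le_div_of_nonneg_left hn0 h3 h2
    calc 1 + (n:ℝ)/((2*(k:ℝ)+1)*(2*(k:ℝ)+2+(n:ℝ))) - 1
        = (n:ℝ)/((2*(k:ℝ)+1)*(2*(k:ℝ)+2+(n:ℝ))) := by ring
      _ ≤ (n:ℝ)/((k:ℝ)+1)^2 := this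
      _ = (n:ℝ) * (1/((k:ℝ)+1)^2) := by ring
  exact Real.multipliable_of_summable_log
    (fun k => lt_of_lt_of_le one_pos (hg1 k)) hlog

open Filter Finset Topology in
theorem stmt_1 (n : ℕ) (hn : 1 ≤ n) :
    unitBallVolume (n - 1) / unitBallVolume n =
      (1 / Real.pi) *
        ∏' k : ℕ, (2 * ((k : ℝ) + 1) / (2 * ((k : ℝ) + 1) - 1)) *
          ((2 * ((k : ℝ) + 1) + n - 1) / (2 * ((k : ℝ) + 1) + n)) := by
  have hn1 : (1:ℝ) ≤ (n:ℝ) := by exact_mod_cast hn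
  have htp : ∏' k : ℕ, (2 * ((k : ℝ) + 1) / (2 * ((k : ℝ) + 1) - 1)) *
      ((2 * ((k : ℝ) + 1) + n - 1) / (2 * ((k : ℝ) + 1) + n)) =
      Real.sqrt π * Real.Gamma ((n:ℝ)/2+1) / Real.Gamma (((n:ℝ)-1)/2+1) :=
    tendsto_nhds_unique ((multipliable_g n hn).hasProd.tendsto_prod_nat) (tendstoL n hn)
  rw [htp]
  have hcast : (((n-1:ℕ)):ℝ) = (n:ℝ) - 1 := by
    push_cast [hn]
    ring
  rw [unitBallVolume, unitBallVolume, hcast]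
  have e1 : 1 + ((n:ℝ)-1)/2 = ((n:ℝ)-1)/2 + 1 := by ring
  have e2 : 1 + (n:ℝ)/2 = (n:ℝ)/2 + 1 := by ring
  rw [e1, e2]
  have hG2 : 0 < Real.Gamma (((n:ℝ)-1)/2+1) := Real.Gamma_pos_of_pos (by linarith)
  have hG4 : 0 < Real.Gamma ((n:ℝ)/2+1) := Real.Gamma_pos_of_pos (by positivity)
  have hP1 : (0:ℝ) < π ^ (((n:ℝ)-1)/2) := rpow_pos_of_pos pi_pos _
  have hP2 : (0:ℝ) < π ^ ((n:ℝ)/2) := rpow_pos_of_pos pi_pos _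
  have hs : (0:ℝ) < Real.sqrt π := Real.sqrt_pos.mpr pi_pos
  have key : π ^ ((n:ℝ)/2) = π ^ (((n:ℝ)-1)/2) * Real.sqrt π := by
    rw [Real.sqrt_eq_rpow, ← Real.rpow_add pi_pos]
    congr 1
    ring
  have hss : Real.sqrt π * Real.sqrt π = π := Real.mul_self_sqrt pi_pos.le
  rw [key]
  set G2 := Real.Gamma (((n:ℝ)-1)/2+1) with hG2d
  set G4 := Real.Gamma ((n:ℝ)/2+1) with hG4d
  set P1 := π ^ (((n:ℝ)-1)/2) with hP1d
  set s := Real.sqrt π with hsd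
  rw [← hss]
  field_simp
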